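/- Let {C_r}_{r≥0} be a convex foliation of ℝ^n and let γ : I → ℝ^n (I = [0, T∞) with T∞ ∈ (0,∞]) be a generalized orbit of the foliation. Then γ is a (continuous) self-contracted curve. -/
import Mathlib


open Set Metric Filter Topology RealInnerProductSpace

/-- A curve `γ : I → ℝⁿ` is *self-contracted* if for all `t₁ ≤ t₂ ≤ t₃` in `I`,
`‖γ t₁ - γ t₃‖ ≥ ‖γ t₂ - γ t₃‖`. -/
def SelfContracted {n : ℕ} (I : Set ℝ) (γ : ℝ → EuclideanSpace ℝ (Fin n)) : Prop :=
  ∀ t₁ ∈ I, ∀ t₂ ∈ I, ∀ t₃ ∈ I, t₁ ≤ t₂ → t₂ ≤ t₃ →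
    ‖γ t₂ - γ t₃‖ ≤ ‖γ t₁ - γ t₃‖

/-- The normal cone of a convex set `K` at a point `u₀`. -/
def normalCone {n : ℕ} (K : Set (EuclideanSpace ℝ (Fin n))) (u₀ : EuclideanSpace ℝ (Fin n)) :
    Set (EuclideanSpace ℝ (Fin n)) :=
  {v | ∀ u ∈ K, ⟪v, u - u₀⟫ ≤ 0}

/-- The set `sec⁻(τ)` of limits of backward unit secant vectors of the curve `γ` at `τ`. -/
def secMinus {n : ℕ} (I : Set ℝ) (γ : ℝ → EuclideanSpace ℝ (Fin n)) (τ : ℝ) :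
    Set (EuclideanSpace ℝ (Fin n)) :=
  {q | ‖q‖ = 1 ∧ ∃ t : ℕ → ℝ, (∀ k, t k ∈ I) ∧ (∀ k, t k < τ) ∧
    Tendsto t atTop (nhds τ) ∧
    Tendsto (fun k => ‖γ (t k) - γ τ‖⁻¹ • (γ (t k) - γ τ)) atTop (nhds q)}

/-- A family `{C r}_{r ≥ 0}` of nonempty compact convex sets is a *convex foliation* of
`ℝⁿ` if it is strictly nested (`r₁ < r₂ → C r₁ ⊆ int C r₂`) and the boundaries
`∂(C r)`, `r ≥ 0`, cover `ℝⁿ \ int (C 0)`. -/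
def IsConvexFoliation {n : ℕ} (C : ℝ → Set (EuclideanSpace ℝ (Fin n))) : Prop :=
  (∀ r, 0 ≤ r → (C r).Nonempty ∧ IsCompact (C r) ∧ Convex ℝ (C r)) ∧
  (∀ r₁ r₂, 0 ≤ r₁ → r₁ < r₂ → C r₁ ⊆ interior (C r₂)) ∧
  (⋃ r ∈ Ici (0 : ℝ), frontier (C r)) = univ \ interior (C 0)

/-- A continuous curve `γ : I → ℝⁿ` is a *generalized orbit* of the convex foliation
`{C r}` if its image avoids `int (C 0)`, the level function `r(·)` (determined by
`γ(t) ∈ ∂ C (r t)`) is strictly decreasing, and `sec⁻(t) ⊆ N_{C (r t)}(γ t)` for all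
`t ∈ I`. -/
def IsGeneralizedOrbit {n : ℕ} (C : ℝ → Set (EuclideanSpace ℝ (Fin n)))
    (I : Set ℝ) (γ : ℝ → EuclideanSpace ℝ (Fin n)) (r : ℝ → ℝ) : Prop :=
  ContinuousOn γ I ∧
  (∀ t ∈ I, γ t ∉ interior (C 0)) ∧
  (∀ t ∈ I, 0 ≤ r t ∧ γ t ∈ frontier (C (r t))) ∧
  (∀ t₁ ∈ I, ∀ t₂ ∈ I, t₁ < t₂ → r t₂ < r t₁) ∧
  (∀ t ∈ I, secMinus I γ t ⊆ normalCone (C (r t)) (γ t))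

/-- Every generalized orbit of a convex foliation, on `I = [0, T∞)` with
`T∞ ∈ (0, ∞]`, is a (continuous) self-contracted curve. -/
theorem generalizedOrbit_selfContracted {n : ℕ}
    (C : ℝ → Set (EuclideanSpace ℝ (Fin n))) (hC : IsConvexFoliation C)
    (T : ENNReal) (hT : 0 < T) (I : Set ℝ)
    (hI : I = {t : ℝ | 0 ≤ t ∧ ENNReal.ofReal t < T})
    (γ : ℝ → EuclideanSpace ℝ (Fin n)) (r : ℝ → ℝ)
    (hγ : IsGeneralizedOrbit C I γ r) :
    ContinuousOn γ I ∧ SelfContracted I γ := by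
  obtain ⟨hcont, havoid, hfr, hdec, hsec⟩ := hγ
  refine ⟨hcont, ?_⟩
  intro t₁ h₁ t₂ h₂ t₃ h₃ h12 h23
  rcases eq_or_lt_of_le h23 with rfl | h23
  · simpa using norm_nonneg (γ t₁ - γ t₂)
  by_contra hcon
  push_neg at hcon
  -- notation
  set f : ℝ → ℝ := fun t => ‖γ t - γ t₃‖ with hf
  have hII : ∀ t, t₁ ≤ t → t ≤ t₃ → t ∈ I := by
    intro t ha hb
    rw [hI] at h₁ h₃ ⊢
    exact ⟨le_trans h₁.1 ha, lt_of_le_of_lt (ENNReal.ofReal_le_ofReal hb) h₃.2⟩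
  have hfc : ContinuousOn f (Icc t₁ t₂) := by
    have : Icc t₁ t₂ ⊆ I := fun x hx => hII x hx.1 (le_trans hx.2 h23.le)
    exact ((hcont.mono this).sub continuousOn_const).norm
  set A : Set ℝ := Icc t₁ t₂ ∩ f ⁻¹' Ici (f t₂) with hA
  have hAclosed : IsClosed A := hfc.preimage_isClosed_of_isClosed isClosed_Icc isClosed_Ici
  have hAne : A.Nonempty := ⟨t₂, ⟨h12, le_rfl⟩, mem_preimage.2 (mem_Ici.2 le_rfl)⟩
  have hAbdd : BddBelow A := ⟨t₁, fun x hx => hx.1.1⟩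
  set τ₀ : ℝ := sInf A with hτ₀
  have hτ₀A : τ₀ ∈ A := hAclosed.csInf_mem hAne hAbdd
  have hτ₀I : τ₀ ∈ I := hII τ₀ hτ₀A.1.1 (le_trans hτ₀A.1.2 h23.le)
  have hsτ₀ : t₁ < τ₀ := by
    rcases lt_or_eq_of_le hτ₀A.1.1 with h | h
    · exact h
    · exfalso; have := hτ₀A.2; rw [← h] at this; exact absurd this (not_le.2 hcon)
  have hbelow : ∀ t, t₁ ≤ t → t < τ₀ → f t < f t₂ := by
    intro t ha hb
    by_contra hge
    push_neg at hge
    have : t ∈ A := ⟨⟨ha, le_trans hb.le hτ₀A.1.2⟩, hge⟩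
    exact absurd (csInf_le hAbdd this) (not_le.2 hb)
  -- the sequence approaching τ₀ from below
  set δ : ℝ := τ₀ - t₁ with hδ
  have hδpos : 0 < δ := sub_pos.2 hsτ₀
  set t : ℕ → ℝ := fun k => τ₀ - δ / (k + 1) with ht
  have htlt : ∀ k, t k < τ₀ := by
    intro k
    have : 0 < δ / ((k : ℝ) + 1) := div_pos hδpos (by positivity)
    simp only [ht]; linarith
  have htge : ∀ k, t₁ ≤ t k := by
    intro k
    have h1 : (1 : ℝ) ≤ (k : ℝ) + 1 := by
      have := Nat.cast_nonneg (α := ℝ) k; linarith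
    have : δ / ((k : ℝ) + 1) ≤ δ := by
      rw [div_le_iff₀ (by linarith)]
      nlinarith
    simp only [ht, hδ]; linarith
  have htI : ∀ k, t k ∈ I := fun k =>
    hII _ (htge k) (le_trans (htlt k).le (le_trans hτ₀A.1.2 h23.le))
  have httend : Tendsto t atTop (nhds τ₀) := by
    have h1 : Tendsto (fun k : ℕ => (k : ℝ) + 1) atTop atTop :=
      tendsto_atTop_add_const_right _ _ tendsto_natCast_atTop_atTop
    have h2 : Tendsto (fun k : ℕ => δ / ((k : ℝ) + 1)) atTop (nhds 0) :=
      Tendsto.div_atTop tendsto_const_nhds h1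
    have := tendsto_const_nhds (x := τ₀) (f := atTop (α := ℕ)) |>.sub h2
    simpa using this
  have hflt : ∀ k, f (t k) < f t₂ := fun k => hbelow _ (htge k) (htlt k)
  have hfτ₀ : f t₂ ≤ f τ₀ := hτ₀A.2
  have hvne : ∀ k, γ (t k) - γ τ₀ ≠ 0 := by
    intro k hzero
    have : γ (t k) = γ τ₀ := by rwa [sub_eq_zero] at hzero
    have : f (t k) = f τ₀ := by simp only [hf, this]
    linarith [hflt k, hfτ₀]
  set u : ℕ → EuclideanSpace ℝ (Fin n) :=
    fun k => ‖γ (t k) - γ τ₀‖⁻¹ • (γ (t k) - γ τ₀) with hu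
  have hunorm : ∀ k, ‖u k‖ = 1 := by
    intro k
    simp only [hu, norm_smul, norm_inv, norm_norm]
    exact inv_mul_cancel₀ (norm_ne_zero_iff.2 (hvne k))
  have husphere : ∀ k, u k ∈ sphere (0 : EuclideanSpace ℝ (Fin n)) 1 := by
    intro k; rw [mem_sphere_zero_iff_norm]; exact hunorm k
  obtain ⟨q, hqsph, φ, hφ, huq⟩ :=
    (isCompact_sphere (0 : EuclideanSpace ℝ (Fin n)) 1).tendsto_subseq husphere
  have hqnorm : ‖q‖ = 1 := mem_sphere_zero_iff_norm.1 hqsph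
  have httendφ : Tendsto (t ∘ φ) atTop (nhds τ₀) := httend.comp hφ.tendsto_atTop
  have hqsec : q ∈ secMinus I γ τ₀ := by
    refine ⟨hqnorm, t ∘ φ, fun k => htI _, fun k => htlt _, httendφ, ?_⟩
    exact huq
  have hqnc : q ∈ normalCone (C (r τ₀)) (γ τ₀) := hsec τ₀ hτ₀I hqsec
  -- γ t₃ lies in the interior of C (r τ₀)
  have hrt3 := hfr t₃ h₃
  have hγt3 : γ t₃ ∈ C (r t₃) := by
    have hcl : IsClosed (C (r t₃)) := (hC.1 (r t₃) hrt3.1).2.1.isClosed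
    exact hcl.frontier_subset hrt3.2
  have hτ₀lt : τ₀ < t₃ := lt_of_le_of_lt hτ₀A.1.2 h23
  have hrlt : r t₃ < r τ₀ := hdec τ₀ hτ₀I t₃ h₃ hτ₀lt
  have hint : γ t₃ ∈ interior (C (r τ₀)) :=
    hC.2.1 (r t₃) (r τ₀) hrt3.1 hrlt hγt3
  obtain ⟨ε, hεpos, hball⟩ := Metric.mem_nhds_iff.1 (isOpen_interior.mem_nhds hint)
  have hu_in : γ t₃ + (ε / 2) • q ∈ C (r τ₀) := by
    apply interior_subset
    apply hball
    rw [mem_ball, dist_eq_norm]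
    have : γ t₃ + (ε / 2) • q - γ t₃ = (ε / 2) • q := by abel
    rw [this, norm_smul, hqnorm]
    simp only [mul_one]
    rw [Real.norm_eq_abs, abs_of_pos (by linarith)]
    linarith
  have hkey : ⟪q, γ t₃ - γ τ₀⟫ ≤ -(ε / 2) := by
    have h0 := hqnc _ hu_in
    have heq : γ t₃ + (ε / 2) • q - γ τ₀ = (γ t₃ - γ τ₀) + (ε / 2) • q := by abel
    rw [heq, inner_add_right, real_inner_smul_right, real_inner_self_eq_norm_sq, hqnorm] at h0
    linarith
  set w : EuclideanSpace ℝ (Fin n) := γ τ₀ - γ t₃ with hw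
  have hqw : ε / 2 ≤ ⟪q, w⟫ := by
    have : w = -(γ t₃ - γ τ₀) := by rw [neg_sub]
    rw [this, inner_neg_right]
    linarith
  -- convergence facts
  have hinnerlim : Tendsto (fun k => ⟪u (φ k), w⟫) atTop (nhds ⟪q, w⟫) :=
    huq.inner tendsto_const_nhds
  have hγlim : Tendsto (fun k => γ (t (φ k))) atTop (nhds (γ τ₀)) := by
    have hcw : Tendsto γ (nhdsWithin τ₀ I) (nhds (γ τ₀)) := (hcont τ₀ hτ₀I).tendsto
    have : Tendsto (t ∘ φ) atTop (nhdsWithin τ₀ I) :=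
      tendsto_nhdsWithin_of_tendsto_nhds_of_eventually_within _ httendφ
        (Eventually.of_forall fun k => htI _)
    exact hcw.comp this
  have hnormlim : Tendsto (fun k => ‖γ (t (φ k)) - γ τ₀‖) atTop (nhds 0) := by
    have h0 : Tendsto (fun k => γ (t (φ k)) - γ τ₀) atTop (nhds (γ τ₀ - γ τ₀)) :=
      hγlim.sub (tendsto_const_nhds (x := γ τ₀))
    rw [sub_self] at h0
    simpa using h0.norm
  have hsumlim : Tendsto (fun k => ‖γ (t (φ k)) - γ τ₀‖ + 2 * ⟪u (φ k), w⟫) atTop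
      (nhds (0 + 2 * ⟪q, w⟫)) :=
    hnormlim.add (hinnerlim.const_mul 2)
  have hev : ∀ᶠ k in atTop, 0 < ‖γ (t (φ k)) - γ τ₀‖ + 2 * ⟪u (φ k), w⟫ := by
    apply hsumlim.eventually_const_lt
    rw [zero_add]
    linarith
  obtain ⟨k, hk⟩ := hev.exists
  -- final contradiction
  set v : EuclideanSpace ℝ (Fin n) := γ (t (φ k)) - γ τ₀ with hv
  have hvnorm : 0 < ‖v‖ := norm_pos_iff.2 (hvne (φ k))
  have hinner_vw : ⟪v, w⟫ = ‖v‖ * ⟪u (φ k), w⟫ := by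
    have : ⟪u (φ k), w⟫ = ‖v‖⁻¹ * ⟪v, w⟫ := by
      simp only [hu, hv, real_inner_smul_left]
    rw [this, ← mul_assoc, mul_inv_cancel₀ (ne_of_gt hvnorm), one_mul]
  have hdecomp : γ (t (φ k)) - γ t₃ = v + w := by simp only [hv, hw]; abel
  have hsq : ‖γ (t (φ k)) - γ t₃‖ ^ 2 = ‖v‖ ^ 2 + 2 * ⟪v, w⟫ + ‖w‖ ^ 2 := by
    rw [hdecomp, @norm_add_sq_real]
  have hlt1 : f (t (φ k)) < f τ₀ := lt_of_lt_of_le (hflt (φ k)) hfτ₀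
  have hfw : f τ₀ = ‖w‖ := rfl
  have hlt2 : ‖γ (t (φ k)) - γ t₃‖ < ‖w‖ := by
    rw [← hfw]; exact hlt1
  have hpos : 0 < ‖v‖ + 2 * ⟪u (φ k), w⟫ := hk
  nlinarith [norm_nonneg (γ (t (φ k)) - γ t₃), norm_nonneg w, hsq, hinner_vw,
    mul_pos hvnorm hpos]
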